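/- Let n ≥ 1, let Z be a closed subset of Euclidean n-space (EuclideanSpace ℝ (Fin n)) whose Hausdorff dimension is strictly less than n − 1, and let U be a convex open subset of Euclidean n-space. Then for any points p, q ∈ U \ Z and any ε > 0, there exists a continuous path γ : [0,1] → U \ Z with γ(0) = p, γ(1) = q, whose length (total variation) is at most dist(p,q) + ε. In particular, the intrinsic (path) distance on U \ Z restricted from U equals the distance of the ambient space. -/

import Mathlib

open ENNReal NNReal Set MeasureTheory


lemma ediam_prod_le' {X Y : Type*} [PseudoEMetricSpace X] [PseudoEMetricSpace Y]
    (A : Set X) (B : Set Y) :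
    EMetric.diam (A ×ˢ B) ≤ max (EMetric.diam A) (EMetric.diam B) := by
  apply EMetric.diam_le
  rintro ⟨x1, x2⟩ ⟨hx1, hx2⟩ ⟨y1, y2⟩ ⟨hy1, hy2⟩
  rw [Prod.edist_eq]
  exact max_le_max (EMetric.edist_le_diam_of_mem hx1 hy1)
    (EMetric.edist_le_diam_of_mem hx2 hy2)

lemma hm_prod_Icc_zero {X : Type*} [MetricSpace X] [MeasurableSpace X] [BorelSpace X]
    [SecondCountableTopology X]
    {A : Set X} {s : ℝ≥0} (hs : 0 < s) (hA : μH[(s:ℝ)] A = 0) (a b : ℝ) :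
    μH[(s:ℝ) + 1] (A ×ˢ Icc a b) = 0 := by
  rcases lt_or_ge b a with hba | hab
  · rw [Icc_eq_empty hba.not_ge, Set.prod_empty, measure_empty]
  have key : ∀ δ : ℝ, 0 < δ →
      μH[(s:ℝ) + 1] (A ×ˢ Icc a b) ≤ ENNReal.ofReal ((b - a + 1) * (2 * δ)) := by
    intro δ hδ
    rw [MeasureTheory.Measure.hausdorffMeasure_apply]
    refine iSup₂_le fun r hr => ?_
    set R : ℝ≥0∞ := min r 1 with hRdef
    have hR0 : 0 < R := lt_min hr zero_lt_one
    have hRtop : R ≠ ∞ := ((min_le_right r 1).trans_lt one_lt_top).ne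
    set Rr : ℝ := R.toReal with hRrdef
    have hRr0 : 0 < Rr := ENNReal.toReal_pos hR0.ne' hRtop
    have hRr1 : Rr ≤ 1 := by
      have := ENNReal.toReal_mono one_ne_top (min_le_right r 1)
      simpa using this
    have hofR : ENNReal.ofReal Rr = R := ENNReal.ofReal_toReal hRtop
    -- extract a good cover of A at scale R
    have hA' := hA
    rw [MeasureTheory.Measure.hausdorffMeasure_apply] at hA'
    have hinf : (⨅ (t : ℕ → Set X) (_ : A ⊆ ⋃ n, t n) (_ : ∀ n, EMetric.diam (t n) ≤ R),
        ∑' n, ⨆ _ : (t n).Nonempty, EMetric.diam (t n) ^ (s:ℝ)) = 0 := by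
      refine le_antisymm ?_ (zero_le)
      calc _ ≤ _ := le_iSup₂ (f := fun (r' : ℝ≥0∞) (_ : 0 < r') =>
          ⨅ (t : ℕ → Set X) (_ : A ⊆ ⋃ n, t n) (_ : ∀ n, EMetric.diam (t n) ≤ r'),
            ∑' n, ⨆ _ : (t n).Nonempty, EMetric.diam (t n) ^ (s:ℝ)) R hR0
        _ = 0 := hA'
    have h1 : (⨅ (t : ℕ → Set X) (_ : A ⊆ ⋃ n, t n) (_ : ∀ n, EMetric.diam (t n) ≤ R),
        ∑' n, ⨆ _ : (t n).Nonempty, EMetric.diam (t n) ^ (s:ℝ)) < ENNReal.ofReal δ := by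
      rw [hinf]; exact ENNReal.ofReal_pos.2 hδ
    obtain ⟨t, h2⟩ := iInf_lt_iff.mp h1
    obtain ⟨htA, h3⟩ := iInf_lt_iff.mp h2
    obtain ⟨htd, htsum⟩ := iInf_lt_iff.mp h3
    have hspos : (0:ℝ) < (s:ℝ) := by exact_mod_cast hs
    have hDsum : ∑' n, EMetric.diam (t n) ^ (s:ℝ) ≤ ENNReal.ofReal δ := by
      refine le_trans (le_of_eq (tsum_congr fun n => ?_)) htsum.le
      by_cases h : (t n).Nonempty
      · rw [iSup_pos h]
      · rw [iSup_neg h, not_nonempty_iff_eq_empty.mp h, (by exact EMetric.diam_empty : EMetric.diam (∅ : Set X) = 0),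
          ENNReal.zero_rpow_of_pos hspos]
        exact _root_.bot_eq_zero.symm
    set ρ : ℕ → ℝ := fun i => min Rr ((δ * 2⁻¹ ^ (i + 1)) ^ (s:ℝ)⁻¹) with hρdef
    have hρ0 : ∀ i, 0 < ρ i := fun i =>
      lt_min hRr0 (Real.rpow_pos_of_pos (by positivity) _)
    set c : ℕ → ℝ := fun i => max (EMetric.diam (t i)).toReal (ρ i) with hcdef
    have hc0 : ∀ i, 0 < c i := fun i => (hρ0 i).trans_le (le_max_right _ _)
    have hDfin : ∀ i, EMetric.diam (t i) ≠ ∞ := fun i =>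
      ((htd i).trans_lt hRtop.lt_top).ne
    have hDR : ∀ i, (EMetric.diam (t i)).toReal ≤ Rr :=
      fun i => ENNReal.toReal_mono hRtop (htd i)
    have hcR : ∀ i, c i ≤ Rr := fun i => max_le (hDR i) (min_le_left _ _)
    have hc1 : ∀ i, c i ≤ 1 := fun i => (hcR i).trans hRr1
    have hDc : ∀ i, EMetric.diam (t i) ≤ ENNReal.ofReal (c i) := fun i => by
      rw [← ENNReal.ofReal_toReal (hDfin i)]
      exact ENNReal.ofReal_le_ofReal (le_max_left _ _)
    set u : ℕ × ℕ → Set (X × ℝ) := fun ij =>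
      (t ij.1) ×ˢ (Icc (a + ij.2 * c ij.1) (a + (ij.2 + 1) * c ij.1) ∩ Icc a b) with hudef
    have hudiam : ∀ ij : ℕ × ℕ, EMetric.diam (u ij) ≤ ENNReal.ofReal (c ij.1) := by
      rintro ⟨i, j⟩
      refine (ediam_prod_le' _ _).trans (max_le (hDc i) ?_)
      refine (EMetric.diam_mono inter_subset_left).trans ?_
      rw [Real.ediam_Icc]
      exact ENNReal.ofReal_le_ofReal (le_of_eq (by ring))
    have hudiamR : ∀ ij, EMetric.diam (u ij) ≤ R := fun ij =>
      (hudiam ij).trans (by rw [← hofR]; exact ENNReal.ofReal_le_ofReal (hcR _))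
    set e : ℕ ≃ ℕ × ℕ := (Denumerable.eqv (ℕ × ℕ)).symm with hedef
    have hcov : A ×ˢ Icc a b ⊆ ⋃ n, (u ∘ e) n := by
      rintro ⟨x, y⟩ ⟨hx, hy⟩
      obtain ⟨i, hi⟩ := mem_iUnion.mp (htA hx)
      have hy1 : a ≤ y := hy.1
      have hci := hc0 i
      have hj1 : (⌊(y - a) / c i⌋₊ : ℝ) ≤ (y - a) / c i :=
        Nat.floor_le (div_nonneg (by linarith) hci.le)
      have hj2 : (y - a) / c i < ⌊(y - a) / c i⌋₊ + 1 := Nat.lt_floor_add_one _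
      have hj1' : (⌊(y - a) / c i⌋₊ : ℝ) * c i ≤ y - a := (le_div_iff₀ hci).mp hj1
      have hj2' : y - a < ((⌊(y - a) / c i⌋₊ : ℝ) + 1) * c i := (div_lt_iff₀ hci).mp hj2
      refine mem_iUnion.2 ⟨e.symm (i, ⌊(y - a) / c i⌋₊), ?_⟩
      simp only [Function.comp_apply, Equiv.apply_symm_apply]
      exact ⟨hi, ⟨⟨by linarith, by linarith⟩, hy⟩⟩
    have hstep : (⨅ (t' : ℕ → Set (X × ℝ)) (_ : A ×ˢ Icc a b ⊆ ⋃ n, t' n)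
        (_ : ∀ n, EMetric.diam (t' n) ≤ r),
        ∑' n, ⨆ _ : (t' n).Nonempty, EMetric.diam (t' n) ^ ((s:ℝ) + 1))
        ≤ ∑' n, ⨆ _ : ((u ∘ e) n).Nonempty, EMetric.diam ((u ∘ e) n) ^ ((s:ℝ) + 1) :=
      iInf₂_le_of_le (u ∘ e) hcov
        (iInf_le_of_le (fun n => (hudiamR (e n)).trans (min_le_left _ _)) le_rfl)
    refine hstep.trans ?_
    have h4 : (∑' n, ⨆ _ : ((u ∘ e) n).Nonempty, EMetric.diam ((u ∘ e) n) ^ ((s:ℝ) + 1))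
        ≤ ∑' ij : ℕ × ℕ, EMetric.diam (u ij) ^ ((s:ℝ) + 1) := by
      rw [← e.tsum_eq (fun ij => EMetric.diam (u ij) ^ ((s:ℝ) + 1))]
      exact ENNReal.tsum_le_tsum fun n => iSup_le fun _ => le_rfl
    refine h4.trans ?_
    have hprod : (∑' ij : ℕ × ℕ, EMetric.diam (u ij) ^ ((s:ℝ) + 1))
        = ∑' i : ℕ, ∑' j : ℕ, EMetric.diam (u (i, j)) ^ ((s:ℝ) + 1) := by
      rw [← ENNReal.tsum_prod (f := fun i j => EMetric.diam (u (i, j)) ^ ((s:ℝ) + 1))]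
    rw [hprod]
    have hper : ∀ i, (∑' j : ℕ, EMetric.diam (u (i, j)) ^ ((s:ℝ) + 1))
        ≤ ENNReal.ofReal ((b - a + 1) * c i ^ (s:ℝ)) := by
      intro i
      set N := ⌊(b - a) / c i⌋₊ with hN
      have hvanish : ∀ j ∉ Finset.range (N + 1),
          EMetric.diam (u (i, j)) ^ ((s:ℝ) + 1) = 0 := by
        intro j hj
        have hemp : u (i, j) = ∅ := by
          rw [eq_empty_iff_forall_notMem]
          rintro ⟨x, y⟩ ⟨-, ⟨⟨hy1, -⟩, ⟨-, hy2⟩⟩⟩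
          have hjc : (j:ℝ) * c i ≤ b - a := by
            simp only at hy1 hy2
            linarith
          have hfl : (j:ℝ) ≤ (b - a) / c i := (le_div_iff₀ (hc0 i)).2 hjc
          have : j ≤ N := Nat.le_floor hfl
          exact hj (Finset.mem_range.2 (Nat.lt_succ_of_le this))
        rw [hemp, (by exact EMetric.diam_empty : EMetric.diam (∅ : Set (X × ℝ)) = 0), ENNReal.zero_rpow_of_pos (by positivity)]
      rw [tsum_eq_sum hvanish]
      have hterm : ∀ j ∈ Finset.range (N + 1),
          EMetric.diam (u (i, j)) ^ ((s:ℝ) + 1) ≤ ENNReal.ofReal (c i ^ ((s:ℝ) + 1)) := by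
        intro j _
        rw [← ENNReal.ofReal_rpow_of_pos (hc0 i)]
        exact ENNReal.rpow_le_rpow (hudiam (i, j)) (by positivity)
      refine (Finset.sum_le_sum hterm).trans ?_
      rw [Finset.sum_const, Finset.card_range, nsmul_eq_mul]
      have hcast : ((N + 1 : ℕ) : ℝ≥0∞) ≤ ENNReal.ofReal ((b - a) / c i + 1) := by
        rw [show ((N + 1 : ℕ) : ℝ≥0∞) = ENNReal.ofReal ((N:ℝ) + 1) by
          rw [ENNReal.ofReal_add (by positivity) zero_le_one]; simp]
        refine ENNReal.ofReal_le_ofReal ?_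
        have := Nat.floor_le (div_nonneg (by linarith : (0:ℝ) ≤ b - a) (hc0 i).le)
        rw [hN]; linarith
      refine (mul_le_mul' hcast le_rfl).trans ?_
      have hdivnn : (0:ℝ) ≤ (b - a) / c i + 1 := by
        have := div_nonneg (by linarith : (0:ℝ) ≤ b - a) (hc0 i).le
        linarith
      rw [← ENNReal.ofReal_mul hdivnn]
      refine ENNReal.ofReal_le_ofReal ?_
      have hci := hc0 i
      have h1c := hc1 i
      have hcs : (0:ℝ) ≤ c i ^ (s:ℝ) := Real.rpow_nonneg hci.le _
      rw [Real.rpow_add_one hci.ne' (s:ℝ)]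
      have heq : ((b - a) / c i + 1) * (c i ^ (s:ℝ) * c i)
          = (b - a) * c i ^ (s:ℝ) + c i ^ (s:ℝ) * c i := by
        field_simp
      rw [heq]
      nlinarith
    refine (ENNReal.tsum_le_tsum hper).trans ?_
    have hsplit : ∀ i, ENNReal.ofReal ((b - a + 1) * c i ^ (s:ℝ))
        ≤ ENNReal.ofReal (b - a + 1) *
          (EMetric.diam (t i) ^ (s:ℝ) + ENNReal.ofReal (δ * 2⁻¹ ^ (i + 1))) := by
      intro i
      rw [ENNReal.ofReal_mul (by linarith)]
      refine mul_le_mul' le_rfl ?_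
      have hcmax : c i = max (EMetric.diam (t i)).toReal (ρ i) := rfl
      rcases max_cases (EMetric.diam (t i)).toReal (ρ i) with ⟨hceq, -⟩ | ⟨hceq, -⟩
      · rw [hcmax, hceq]
        refine le_trans ?_ (self_le_add_right _ _)
        by_cases hD0 : (EMetric.diam (t i)).toReal = 0
        · rw [hD0, Real.zero_rpow hspos.ne', ENNReal.ofReal_zero]
          exact zero_le
        · have hDpos : 0 < (EMetric.diam (t i)).toReal :=
            lt_of_le_of_ne ENNReal.toReal_nonneg (Ne.symm hD0)
          rw [← ENNReal.ofReal_rpow_of_pos hDpos, ENNReal.ofReal_toReal (hDfin i)]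
      · rw [hcmax, hceq]
        refine le_trans ?_ (le_add_self)
        refine ENNReal.ofReal_le_ofReal ?_
        calc ρ i ^ (s:ℝ) ≤ (((δ * 2⁻¹ ^ (i + 1)) ^ (s:ℝ)⁻¹) ^ (s:ℝ)) :=
              Real.rpow_le_rpow (hρ0 i).le (min_le_right _ _) hspos.le
          _ = δ * 2⁻¹ ^ (i + 1) := Real.rpow_inv_rpow (by positivity) hspos.ne'
    refine (ENNReal.tsum_le_tsum hsplit).trans ?_
    rw [ENNReal.tsum_mul_left, ENNReal.tsum_add]
    have hgeo : (∑' i : ℕ, ENNReal.ofReal (δ * 2⁻¹ ^ (i + 1))) ≤ ENNReal.ofReal δ := by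
      have hterm : ∀ i : ℕ, ENNReal.ofReal (δ * 2⁻¹ ^ (i + 1))
          = ENNReal.ofReal δ * ((2:ℝ≥0∞)⁻¹ * 2⁻¹ ^ i) := by
        intro i
        rw [ENNReal.ofReal_mul hδ.le, ENNReal.ofReal_pow (by norm_num), pow_succ]
        congr 1
        rw [show ENNReal.ofReal (2⁻¹ : ℝ) = (2:ℝ≥0∞)⁻¹ by
          rw [ENNReal.ofReal_inv_of_pos (by norm_num)]; norm_num]
        ring
      rw [tsum_congr hterm, ENNReal.tsum_mul_left]
      have : (∑' i : ℕ, ((2:ℝ≥0∞)⁻¹ * 2⁻¹ ^ i)) = 1 := by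
        rw [ENNReal.tsum_mul_left, ENNReal.tsum_geometric, ENNReal.one_sub_inv_two,
          inv_inv, ENNReal.inv_mul_cancel (by norm_num) (by norm_num)]
      rw [this, mul_one]
    refine le_trans (mul_le_mul' le_rfl (add_le_add hDsum hgeo)) ?_
    rw [← ENNReal.ofReal_add hδ.le hδ.le, ← ENNReal.ofReal_mul (by linarith)]
    exact ENNReal.ofReal_le_ofReal (le_of_eq (by ring))
  refine le_antisymm ?_ (zero_le)
  refine ENNReal.le_of_forall_pos_le_add fun ε hε _ => ?_
  rw [zero_add]
  have hba1 : (0:ℝ) < b - a + 1 := by linarith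
  have hδ : (0:ℝ) < (ε:ℝ) / (2 * (b - a + 1)) := by positivity
  refine (key _ hδ).trans ?_
  rw [show (b - a + 1) * (2 * ((ε:ℝ) / (2 * (b - a + 1)))) = (ε:ℝ) by field_simp]
  simp

lemma dimH_prod_Icc_le' {X : Type*} [MetricSpace X] [MeasurableSpace X] [BorelSpace X]
    [SecondCountableTopology X]
    {A : Set X} {s : ℝ≥0} (hs : 0 < s) (hA : dimH A < (s:ℝ≥0∞)) (a b : ℝ) :
    dimH (A ×ˢ Icc a b) ≤ (s:ℝ≥0∞) + 1 := by
  have h0 : μH[(s:ℝ)] A = 0 := hausdorffMeasure_of_dimH_lt hA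
  have h1 := hm_prod_Icc_zero hs h0 a b
  have h2 : dimH (A ×ˢ Icc a b) ≤ ((s + 1 : ℝ≥0) : ℝ≥0∞) := by
    refine dimH_le_of_hausdorffMeasure_ne_top ?_
    rw [show ((s + 1 : ℝ≥0) : ℝ) = (s:ℝ) + 1 by push_cast; ring, h1]
    exact ENNReal.zero_ne_top
  simpa using h2

lemma dimH_cone_le {E : Type*} [NormedAddCommGroup E] [NormedSpace ℝ E]
    [MeasurableSpace E] [BorelSpace E] [SecondCountableTopology E]
    {Z : Set E} {s : ℝ≥0} (hs : 0 < s) (hZ : dimH Z < (s:ℝ≥0∞)) (p : E) :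
    dimH {x : E | ∃ z ∈ Z, ∃ r : ℝ, 1 ≤ r ∧ x = p + r • (z - p)} ≤ (s:ℝ≥0∞) + 1 := by
  have hC : {x : E | ∃ z ∈ Z, ∃ r : ℝ, 1 ≤ r ∧ x = p + r • (z - p)}
      = ⋃ k : ℕ, (fun zr : E × ℝ => p + zr.2 • (zr.1 - p)) ''
        ((Z ∩ Metric.closedBall p k) ×ˢ Icc 1 (k:ℝ)) := by
    ext x
    simp only [mem_setOf_eq, mem_iUnion, mem_image, Set.mem_prod, mem_inter_iff,
      Metric.mem_closedBall, mem_Icc]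
    constructor
    · rintro ⟨z, hz, r, hr, rfl⟩
      refine ⟨⌈max r (dist z p)⌉₊, (z, r), ⟨⟨hz, ?_⟩, hr, ?_⟩, rfl⟩
      · exact (le_max_right _ _).trans (Nat.le_ceil _)
      · exact (le_max_left _ _).trans (Nat.le_ceil _)
    · rintro ⟨k, ⟨z, r⟩, ⟨⟨hz, -⟩, h1r, -⟩, rfl⟩
      exact ⟨z, hz, r, h1r, rfl⟩
  rw [hC, dimH_iUnion]
  refine iSup_le fun k => ?_
  have hlip : LipschitzOnWith (2 * ((k:ℝ≥0) + 1))
      (fun zr : E × ℝ => p + zr.2 • (zr.1 - p))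
      ((Z ∩ Metric.closedBall p k) ×ˢ Icc 1 (k:ℝ)) := by
    apply LipschitzOnWith.of_dist_le_mul
    rintro ⟨z, r⟩ ⟨⟨-, hzb⟩, h1r, hrk⟩ ⟨z', r'⟩ ⟨⟨-, hzb'⟩, h1r', hrk'⟩
    rw [Metric.mem_closedBall] at hzb hzb'
    have key : r • (z - p) - r' • (z' - p) = r • (z - z') + (r - r') • (z' - p) := by
      module
    have h1 : dist (p + r • (z - p)) (p + r' • (z' - p))
        = ‖r • (z - z') + (r - r') • (z' - p)‖ := by
      rw [dist_eq_norm, add_sub_add_left_eq_sub, key]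
    rw [h1]
    have h2 : ‖r • (z - z') + (r - r') • (z' - p)‖
        ≤ |r| * ‖z - z'‖ + |r - r'| * ‖z' - p‖ := by
      refine (norm_add_le _ _).trans ?_
      rw [norm_smul, norm_smul, Real.norm_eq_abs, Real.norm_eq_abs]
    have hzz : ‖z - z'‖ = dist z z' := (dist_eq_norm _ _).symm
    have hzp : ‖z' - p‖ = dist z' p := (dist_eq_norm _ _).symm
    have hrr : |r - r'| = dist r r' := (Real.dist_eq _ _).symm
    have hrabs : |r| ≤ (k:ℝ) + 1 := by
      rw [abs_of_nonneg (by linarith : (0:ℝ) ≤ r)]; linarith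
    have hdp : dist z z' ≤ dist ((z, r) : E × ℝ) (z', r') := by
      rw [Prod.dist_eq]; exact le_max_left _ _
    have hdr : dist r r' ≤ dist ((z, r) : E × ℝ) (z', r') := by
      rw [Prod.dist_eq]; exact le_max_right _ _
    rw [hzz, hzp, hrr] at h2
    refine h2.trans ?_
    rw [show ((2 * ((k:ℝ≥0) + 1) : ℝ≥0) : ℝ) = 2 * ((k:ℝ) + 1) by push_cast; ring]
    have hd0 : (0:ℝ) ≤ dist ((z, r) : E × ℝ) (z', r') := dist_nonneg
    have habs : (0:ℝ) ≤ dist r r' := dist_nonneg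
    have habs' : (0:ℝ) ≤ |r| := abs_nonneg _
    have hd1 : (0:ℝ) ≤ dist z z' := dist_nonneg
    have hd2 : (0:ℝ) ≤ dist z' p := dist_nonneg
    nlinarith [mul_le_mul hrabs hdp hd1 (by positivity : (0:ℝ) ≤ (k:ℝ) + 1),
      mul_le_mul hdr (hzb'.trans (by linarith : (k:ℝ) ≤ (k:ℝ) + 1)) hd2 hd0]
  refine (hlip.dimH_image_le).trans ?_
  exact dimH_prod_Icc_le' hs (lt_of_le_of_lt (dimH_mono inter_subset_left) hZ) 1 k

lemma eVariationOn_Icc_le_lip {F : Type*} [PseudoEMetricSpace F] {f : ℝ → F} {a b : ℝ}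
    {C : ℝ≥0} (h : LipschitzOnWith C f (Icc a b)) (hab : a ≤ b) :
    eVariationOn f (Icc a b) ≤ (C : ℝ≥0∞) * ENNReal.ofReal (b - a) := by
  refine iSup_le ?_
  rintro ⟨n, u, hu, us⟩
  calc (∑ i ∈ Finset.range n, edist (f (u (i + 1))) (f (u i)))
      ≤ ∑ i ∈ Finset.range n, (C : ℝ≥0∞) * edist (u (i + 1)) (u i) :=
        Finset.sum_le_sum fun i _ => h (us _) (us _)
    _ = (C : ℝ≥0∞) * ∑ i ∈ Finset.range n, edist (u (i + 1)) (u i) := by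
        rw [Finset.mul_sum]
    _ ≤ (C : ℝ≥0∞) * ENNReal.ofReal (b - a) := by
        refine mul_le_mul' le_rfl ?_
        have hterm : ∀ i ∈ Finset.range n, edist (u (i + 1)) (u i)
            = ENNReal.ofReal (u (i + 1) - u i) := by
          intro i _
          rw [edist_dist, Real.dist_eq, abs_of_nonneg (sub_nonneg.2 (hu (Nat.le_succ i)))]
        rw [Finset.sum_congr rfl hterm,
          ← ENNReal.ofReal_sum_of_nonneg (fun i _ => sub_nonneg.2 (hu (Nat.le_succ i))),
          Finset.sum_range_sub]
        exact ENNReal.ofReal_le_ofReal (by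
          have h1 := (us n).2
          have h2 := (us 0).1
          linarith)

/-- In a convex open subset of Euclidean n-space minus a closed set Z of
Hausdorff dimension < n − 1, any two points can be joined by a continuous path
avoiding Z whose length (total variation) exceeds the ambient distance by at
most ε. -/
theorem intrinsic_distance_of_remove_small_closed (n : ℕ) (hn : 1 ≤ n)
    (Z : Set (EuclideanSpace ℝ (Fin n))) (hZc : IsClosed Z)
    (hZd : dimH Z < (n : ℝ≥0∞) - 1)
    (U : Set (EuclideanSpace ℝ (Fin n))) (hUo : IsOpen U) (hUconv : Convex ℝ U)
    (p q : EuclideanSpace ℝ (Fin n)) (hp : p ∈ U \ Z) (hq : q ∈ U \ Z)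
    (ε : ℝ) (hε : 0 < ε) :
    ∃ γ : ℝ → EuclideanSpace ℝ (Fin n),
      ContinuousOn γ (Set.Icc 0 1) ∧
      γ 0 = p ∧ γ 1 = q ∧
      (∀ t ∈ Set.Icc (0 : ℝ) 1, γ t ∈ U \ Z) ∧
      eVariationOn γ (Set.Icc 0 1) ≤ ENNReal.ofReal (dist p q + ε) := by
  classical
  obtain ⟨hpU, hpZ⟩ := hp
  obtain ⟨hqU, hqZ⟩ := hq
  -- choose an exponent s with dimH Z < s and s + 1 < n
  obtain ⟨s', hs1, hs2⟩ := exists_between hZd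
  have hs'top : s' ≠ ∞ := (hs2.trans_le le_top).ne
  set s : ℝ≥0 := s'.toNNReal with hsdef
  have hscoe : (s : ℝ≥0∞) = s' := ENNReal.coe_toNNReal hs'top
  have hs0 : 0 < s := by
    rw [← ENNReal.coe_pos, hscoe]
    exact (zero_le).trans_lt hs1
  have hZs : dimH Z < (s:ℝ≥0∞) := by rw [hscoe]; exact hs1
  have hsn : (s:ℝ≥0∞) + 1 < (n : ℝ≥0∞) := by
    have h := ENNReal.add_lt_add_right one_ne_top (hscoe ▸ hs2)
    rwa [tsub_add_cancel_of_le (by exact_mod_cast hn)] at h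
  set Cp := {x : EuclideanSpace ℝ (Fin n) | ∃ z ∈ Z, ∃ r : ℝ, 1 ≤ r ∧ x = p + r • (z - p)}
    with hCpdef
  set Cq := {x : EuclideanSpace ℝ (Fin n) | ∃ z ∈ Z, ∃ r : ℝ, 1 ≤ r ∧ x = q + r • (z - q)}
    with hCqdef
  have hdense : Dense (Cp ∪ Cq)ᶜ := by
    apply dense_compl_of_dimH_lt_finrank
    rw [finrank_euclideanSpace_fin]
    rw [dimH_union]
    exact max_lt ((dimH_cone_le hs0 hZs p).trans_lt hsn)
      ((dimH_cone_le hs0 hZs q).trans_lt hsn)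
  -- midpoint and a nearby generic point m
  set c : EuclideanSpace ℝ (Fin n) := midpoint ℝ p q with hcdef
  have hcU : c ∈ U := hUconv.segment_subset hpU hqU (midpoint_mem_segment p q)
  obtain ⟨δ, hδ0, hballU⟩ := Metric.isOpen_iff.mp hUo c hcU
  set δ' : ℝ := min δ (ε/2) with hδ'def
  have hδ'0 : 0 < δ' := lt_min hδ0 (by linarith)
  obtain ⟨m, hmBc, hmb⟩ := hdense.exists_mem_open Metric.isOpen_ball
    ⟨c, Metric.mem_ball_self hδ'0⟩
  have hmU : m ∈ U := hballU ((Metric.ball_subset_ball (min_le_left _ _)) hmb)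
  have hmCp : m ∉ Cp := fun h => hmBc (Or.inl h)
  have hmCq : m ∉ Cq := fun h => hmBc (Or.inr h)
  have hmZ : m ∉ Z := fun h => hmCp ⟨m, h, 1, le_rfl, by rw [one_smul]; abel⟩
  -- the two segments avoid Z
  have hsegp : ∀ τ : ℝ, 0 ≤ τ → τ ≤ 1 → p + τ • (m - p) ∉ Z := by
    intro τ h0 h1 hzmem
    rcases eq_or_lt_of_le h0 with rfl | hpos
    · rw [zero_smul, add_zero] at hzmem
      exact hpZ hzmem
    · refine hmCp ⟨p + τ • (m - p), hzmem, τ⁻¹, ?_, ?_⟩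
      · nlinarith [inv_pos.2 hpos, mul_inv_cancel₀ (ne_of_gt hpos)]
      · rw [add_sub_cancel_left, smul_smul, inv_mul_cancel₀ hpos.ne', one_smul]
        abel
  have hsegq : ∀ τ : ℝ, 0 ≤ τ → τ ≤ 1 → q + τ • (m - q) ∉ Z := by
    intro τ h0 h1 hzmem
    rcases eq_or_lt_of_le h0 with rfl | hpos
    · rw [zero_smul, add_zero] at hzmem
      exact hqZ hzmem
    · refine hmCq ⟨q + τ • (m - q), hzmem, τ⁻¹, ?_, ?_⟩
      · nlinarith [inv_pos.2 hpos, mul_inv_cancel₀ (ne_of_gt hpos)]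
      · rw [add_sub_cancel_left, smul_smul, inv_mul_cancel₀ hpos.ne', one_smul]
        abel
  -- the broken path
  set γ : ℝ → EuclideanSpace ℝ (Fin n) := fun t =>
    if t ≤ 1/2 then p + (2*t) • (m - p) else q + (2 - 2*t) • (m - q) with hγdef
  have hγcont : Continuous γ := by
    apply Continuous.if_le
    · exact continuous_const.add ((continuous_const.mul continuous_id).smul continuous_const)
    · exact continuous_const.add
        ((continuous_const.sub (continuous_const.mul continuous_id)).smul continuous_const)
    · exact continuous_id
    · exact continuous_const
    · intro x hx
      rw [hx]
      norm_num
  have hγ0 : γ 0 = p := by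
    rw [hγdef]; norm_num
  have hγ1 : γ 1 = q := by
    rw [hγdef]; norm_num
  have hmem : ∀ t ∈ Icc (0:ℝ) 1, γ t ∈ U \ Z := by
    rintro t ⟨ht0, ht1⟩
    by_cases h : t ≤ 1/2
    · have h1 : (0:ℝ) ≤ 2*t := by linarith
      have h2 : 2*t ≤ 1 := by linarith
      simp only [hγdef, if_pos h]
      exact ⟨hUconv.add_smul_sub_mem hpU hmU ⟨h1, h2⟩, hsegp _ h1 h2⟩
    · have h1 : (0:ℝ) ≤ 2 - 2*t := by linarith
      have h2 : 2 - 2*t ≤ 1 := by push_neg at h; linarith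
      simp only [hγdef, if_neg h]
      exact ⟨hUconv.add_smul_sub_mem hqU hmU ⟨h1, h2⟩, hsegq _ h1 h2⟩
  -- the length bound
  have hvar : eVariationOn γ (Icc 0 1) ≤ ENNReal.ofReal (dist p q + ε) := by
    have hsplit := eVariationOn.Icc_add_Icc γ (s := (univ : Set ℝ))
      (by norm_num : (0:ℝ) ≤ 1/2) (by norm_num : (1:ℝ)/2 ≤ 1) (mem_univ _)
    simp only [univ_inter] at hsplit
    rw [← hsplit]
    -- first half
    have heq1 : EqOn γ (fun t : ℝ => p + (2*t) • (m - p)) (Icc (0:ℝ) (1/2)) := by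
      intro x hx
      simp only [hγdef, if_pos hx.2]
    have hlip1 : LipschitzWith (2 * ‖m - p‖₊) (fun t : ℝ => p + (2*t) • (m - p)) := by
      apply LipschitzWith.of_dist_le_mul
      intro x y
      rw [dist_eq_norm, add_sub_add_left_eq_sub, ← sub_smul, norm_smul, Real.norm_eq_abs,
        show 2*x - 2*y = 2*(x - y) by ring, abs_mul, abs_two, Real.dist_eq]
      rw [show ((2 * ‖m - p‖₊ : ℝ≥0) : ℝ) = 2 * ‖m - p‖ by push_cast; ring]
      ring_nf
      exact le_rfl
    have hv1 : eVariationOn γ (Icc (0:ℝ) (1/2)) ≤ ENNReal.ofReal ‖m - p‖ := by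
      rw [eVariationOn.eq_of_eqOn heq1]
      refine (eVariationOn_Icc_le_lip (hlip1.lipschitzOnWith) (by norm_num)).trans ?_
      rw [show ((2 * ‖m - p‖₊ : ℝ≥0) : ℝ≥0∞) = ENNReal.ofReal (2 * ‖m - p‖) by
        rw [← ENNReal.ofReal_coe_nnreal]; push_cast; ring_nf,
        ← ENNReal.ofReal_mul (by positivity)]
      exact ENNReal.ofReal_le_ofReal (by linarith)
    -- second half
    have heq2 : EqOn γ (fun t : ℝ => q + (2 - 2*t) • (m - q)) (Icc (1/2:ℝ) 1) := by
      intro x hx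
      by_cases h : x ≤ 1/2
      · have hx2 : x = 1/2 := le_antisymm h hx.1
        subst hx2
        simp only [hγdef, if_pos le_rfl]
        norm_num
      · simp only [hγdef, if_neg h]
    have hlip2 : LipschitzWith (2 * ‖m - q‖₊) (fun t : ℝ => q + (2 - 2*t) • (m - q)) := by
      apply LipschitzWith.of_dist_le_mul
      intro x y
      rw [dist_eq_norm, add_sub_add_left_eq_sub, ← sub_smul, norm_smul, Real.norm_eq_abs,
        show (2 - 2*x) - (2 - 2*y) = 2*(y - x) by ring, abs_mul, abs_two, Real.dist_eq]
      rw [show ((2 * ‖m - q‖₊ : ℝ≥0) : ℝ) = 2 * ‖m - q‖ by push_cast; ring]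
      rw [abs_sub_comm y x]
      ring_nf
      exact le_rfl
    have hv2 : eVariationOn γ (Icc (1/2:ℝ) 1) ≤ ENNReal.ofReal ‖m - q‖ := by
      rw [eVariationOn.eq_of_eqOn heq2]
      refine (eVariationOn_Icc_le_lip (hlip2.lipschitzOnWith) (by norm_num)).trans ?_
      rw [show ((2 * ‖m - q‖₊ : ℝ≥0) : ℝ≥0∞) = ENNReal.ofReal (2 * ‖m - q‖) by
        rw [← ENNReal.ofReal_coe_nnreal]; push_cast; ring_nf,
        ← ENNReal.ofReal_mul (by positivity)]
      exact ENNReal.ofReal_le_ofReal (by linarith)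
    refine (add_le_add hv1 hv2).trans ?_
    rw [← ENNReal.ofReal_add (norm_nonneg _) (norm_nonneg _)]
    refine ENNReal.ofReal_le_ofReal ?_
    have hmc : dist m c < δ' := hmb
    have hcp : dist c p = dist p q / 2 := by
      rw [hcdef, dist_midpoint_left]
      simp [Real.norm_eq_abs]
      ring
    have hcq : dist c q = dist p q / 2 := by
      rw [hcdef, dist_midpoint_right]
      simp [Real.norm_eq_abs]
      ring
    have h1 : ‖m - p‖ ≤ dist m c + dist c p := by
      rw [← dist_eq_norm]; exact dist_triangle m c p
    have h2 : ‖m - q‖ ≤ dist m c + dist c q := by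
      rw [← dist_eq_norm]; exact dist_triangle m c q
    have hδε : δ' ≤ ε / 2 := min_le_right _ _
    linarith
  exact ⟨γ, hγcont.continuousOn, hγ0, hγ1, hmem, hvar⟩
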